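/- Let K be a field and n ∈ ℕ. Suppose a family {A_i}_{i∈S} is a basis of a free subgroup F ≤ GL(n,K) such that det(M − I_n) ≠ 0 for every M ∈ F \ {I_n}. Fix x̂ ∈ K^n and set u_i := (I_n − A_i)·x̂ and T_i(x) := A_i x + u_i. Then {T_i}_{i∈S} is a basis of a free subgroup F' of the group of invertible affine transformations of K^n, and F' acts on K^n \ {x̂} without nontrivial fixed points. If, additionally, K carries a non-Archimedean valuation |·|, x ∈ K^n with x ≠ x̂, 0 < r < ‖x − x̂‖, and F ≤ SL(n,D,ε) for some 0 < ε ≤ ε₀, where ε₀ := min(r/‖x − x̂‖, 1/‖x̂‖) if x̂ ≠ 0 and ε₀ := r/‖x‖ if x̂ = 0, then F' ≤ SA(n,D,ε) and F' acts on the balls B[x,r], B(x,r) and on the sphere S[x,r] without nontrivial fixed points. -/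

import Mathlib

open scoped Classical

structure IsNAV {K : Type*} [Field K] (v : K → ℝ) : Prop where
  nonneg : ∀ x, 0 ≤ v x
  eq_zero_iff : ∀ x, v x = 0 ↔ x = 0
  map_mul' : ∀ x y, v (x * y) = v x * v y
  add_le' : ∀ x y, v (x + y) ≤ max (v x) (v y)

/-- standard norm on K^n -/
def stdNorm {K : Type*} [Field K] (v : K → ℝ) {n : ℕ} (x : Fin n → K) : ℝ :=
  (List.ofFn fun i => v (x i)).foldr max 0

def cBall {K : Type*} [Field K] (v : K → ℝ) {n : ℕ} (c : Fin n → K) (r : ℝ) :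
    Set (Fin n → K) := {x | stdNorm v (x - c) ≤ r}

def oBall {K : Type*} [Field K] (v : K → ℝ) {n : ℕ} (c : Fin n → K) (r : ℝ) :
    Set (Fin n → K) := {x | stdNorm v (x - c) < r}

def sph {K : Type*} [Field K] (v : K → ℝ) {n : ℕ} (c : Fin n → K) (r : ℝ) :
    Set (Fin n → K) := {x | stdNorm v (x - c) = r}

def EquidecompUsing {X : Type*} (G : Set (X → X)) (A B : Set X) (n : ℕ) : Prop :=
  ∃ (P Q : Fin n → Set X) (g : Fin n → X → X),
    (∀ i, g i ∈ G) ∧ Pairwise (Function.onFun Disjoint P) ∧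
    Pairwise (Function.onFun Disjoint Q) ∧
    (⋃ i, P i) = A ∧ (⋃ i, Q i) = B ∧ ∀ i, g i '' P i = Q i

def ParadoxicalUsing {X : Type*} (G : Set (X → X)) (E : Set X) (r : ℕ) : Prop :=
  E.Nonempty ∧ ∃ m k : ℕ, m + k = r ∧
    ∃ (A : Fin m → Set X) (B : Fin k → Set X) (g : Fin m → X → X) (h : Fin k → X → X),
      (∀ i, g i ∈ G) ∧ (∀ j, h j ∈ G) ∧
      Pairwise (Function.onFun Disjoint (Sum.elim A B)) ∧
      ((⋃ i, A i) ∪ ⋃ j, B j) = E ∧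
      Pairwise (Function.onFun Disjoint fun i => g i '' A i) ∧ (⋃ i, g i '' A i) = E ∧
      Pairwise (Function.onFun Disjoint fun j => h j '' B j) ∧ (⋃ j, h j '' B j) = E

/-- membership in `SA(n,D,ε)` (as a set of self-maps of `K^n`) -/
def memSAeps {K : Type*} [Field K] (v : K → ℝ) {n : ℕ} (ε : ℝ)
    (f : (Fin n → K) → (Fin n → K)) : Prop :=
  ∃ (M : Matrix (Fin n) (Fin n) K) (τ : Fin n → K),
    (∀ i j, v (M i j) ≤ 1) ∧ M.det = 1 ∧
    (∀ i, v (M i i - 1) < ε) ∧ (∀ i j, i ≠ j → v (M i j) < ε) ∧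
    (∀ i, v (τ i) ≤ 1) ∧ ∀ y, f y = M.mulVec y + τ


section Aux

variable {K : Type*} [Field K] {n : ℕ}

private lemma foldr_max_le {c : ℝ} (hc : 0 ≤ c) :
    ∀ l : List ℝ, (∀ a ∈ l, a ≤ c) → l.foldr max 0 ≤ c := by
  intro l
  induction l with
  | nil => intro _; simpa using hc
  | cons a l ih =>
    intro h
    simp only [List.foldr_cons, max_le_iff]
    exact ⟨h a (by simp), ih fun b hb => h b (by simp [hb])⟩

private lemma le_foldr_max : ∀ l : List ℝ, ∀ a ∈ l, a ≤ l.foldr max 0 := by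
  intro l
  induction l with
  | nil => simp
  | cons a l ih =>
    intro b hb
    rcases List.mem_cons.1 hb with h | h
    · simp [h, le_max_left]
    · exact le_trans (ih b h) (by simp [le_max_right])

lemma stdNorm_le {v : K → ℝ} {x : Fin n → K} {c : ℝ} (hc : 0 ≤ c)
    (h : ∀ i, v (x i) ≤ c) : stdNorm v x ≤ c := by
  apply foldr_max_le hc
  intro a ha
  rw [List.mem_ofFn] at ha
  rcases ha with ⟨i, rfl⟩
  exact h i

lemma le_stdNorm (v : K → ℝ) (x : Fin n → K) (i : Fin n) : v (x i) ≤ stdNorm v x :=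
  le_foldr_max _ _ (List.mem_ofFn.2 ⟨i, rfl⟩)

variable {v : K → ℝ} (hv : IsNAV v)

lemma IsNAV.v_zero (hv : IsNAV v) : v 0 = 0 := (hv.eq_zero_iff 0).2 rfl

lemma IsNAV.v_one (hv : IsNAV v) : v 1 = 1 := by
  have h1 : v 1 ≠ 0 := fun h => one_ne_zero ((hv.eq_zero_iff 1).1 h)
  have := hv.map_mul' 1 1
  rw [one_mul] at this
  exact (mul_right_cancel₀ h1 (by rw [← this, one_mul])).symm

lemma IsNAV.v_neg (hv : IsNAV v) (x : K) : v (-x) = v x := by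
  have hm : v (-1) = 1 := by
    have h := hv.map_mul' (-1) (-1)
    rw [neg_mul, one_mul, neg_neg, hv.v_one] at h
    nlinarith [hv.nonneg (-1)]
  calc v (-x) = v ((-1) * x) := by rw [neg_one_mul]
  _ = v x := by rw [hv.map_mul', hm, one_mul]

lemma IsNAV.v_sum_le (hv : IsNAV v) {ι : Type*} (s : Finset ι) (f : ι → K) {c : ℝ}
    (hc : 0 ≤ c) (h : ∀ i ∈ s, v (f i) ≤ c) : v (∑ i ∈ s, f i) ≤ c := by
  classical
  induction s using Finset.induction_on with
  | empty => simpa [hv.v_zero] using hc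
  | @insert a s hx ih =>
    rw [Finset.sum_insert hx]
    refine le_trans (hv.add_le' _ _) (max_le (h a (by simp)) (ih fun i hi => h i (by simp [hi])))

lemma stdNorm_sub_comm (hv : IsNAV v) (a b : Fin n → K) :
    stdNorm v (a - b) = stdNorm v (b - a) := by
  unfold stdNorm
  rw [show (fun i => v ((a - b) i)) = fun i => v ((b - a) i) from
    funext fun i => by rw [show (a - b) i = -((b - a) i) by simp [Pi.sub_apply], hv.v_neg]]

lemma stdNorm_pos (hv : IsNAV v) {x : Fin n → K} (hx : x ≠ 0) : 0 < stdNorm v x := by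
  obtain ⟨i, hi⟩ : ∃ i, x i ≠ 0 := by
    by_contra h; push_neg at h; exact hx (funext h)
  have h1 : 0 < v (x i) :=
    lt_of_le_of_ne (hv.nonneg _) fun h => hi ((hv.eq_zero_iff _).1 h.symm)
  exact lt_of_lt_of_le h1 (le_stdNorm v x i)

/-- The affine homomorphism `M ↦ (y ↦ M (y - xh) + xh)`. -/
def affHom (xh : Fin n → K) : GL (Fin n) K →* Equiv.Perm (Fin n → K) where
  toFun M :=
    { toFun := fun y => (M : Matrix (Fin n) (Fin n) K).mulVec (y - xh) + xh
      invFun := fun y => ((M⁻¹ : GL (Fin n) K) : Matrix (Fin n) (Fin n) K).mulVec (y - xh) + xh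
      left_inv := by
        intro y
        simp only [add_sub_cancel_right, Matrix.mulVec_mulVec]
        rw [show ((M⁻¹ : GL (Fin n) K) : Matrix (Fin n) (Fin n) K) *
            (M : Matrix (Fin n) (Fin n) K) = 1 by
          rw [← Units.val_mul, inv_mul_cancel]; rfl]
        simp
      right_inv := by
        intro y
        simp only [add_sub_cancel_right, Matrix.mulVec_mulVec]
        rw [show (M : Matrix (Fin n) (Fin n) K) *
            ((M⁻¹ : GL (Fin n) K) : Matrix (Fin n) (Fin n) K) = 1 by
          rw [← Units.val_mul, mul_inv_cancel]; rfl]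
        simp }
  map_one' := by
    ext y
    simp
  map_mul' M N := by
    ext y
    simp [Matrix.mulVec_mulVec]

lemma affHom_apply (xh : Fin n → K) (M : GL (Fin n) K) (y : Fin n → K) :
    affHom xh M y = (M : Matrix (Fin n) (Fin n) K).mulVec (y - xh) + xh := rfl

lemma affine_rewrite (M : Matrix (Fin n) (Fin n) K) (xh y : Fin n → K) :
    M.mulVec (y - xh) + xh = M.mulVec y + ((1 : Matrix (Fin n) (Fin n) K) - M).mulVec xh := by
  rw [Matrix.mulVec_sub, Matrix.sub_mulVec, Matrix.one_mulVec]
  abel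

lemma affHom_fixed {xh : Fin n → K} {M : GL (Fin n) K}
    (hdet : ((M : Matrix (Fin n) (Fin n) K) - 1).det ≠ 0) {y : Fin n → K}
    (hy : affHom xh M y = y) : y = xh := by
  set Mm : Matrix (Fin n) (Fin n) K := (M : Matrix (Fin n) (Fin n) K)
  have h1 : Mm.mulVec (y - xh) = y - xh := by
    have h := hy
    rw [affHom_apply] at h
    exact eq_sub_of_add_eq h
  have h3 : (Mm - 1).mulVec (y - xh) = (Mm - 1).mulVec 0 := by
    rw [Matrix.sub_mulVec, Matrix.one_mulVec, h1, Matrix.mulVec_zero, sub_self]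
  have hinj : Function.Injective (Mm - 1).mulVec :=
    Matrix.mulVec_injective_iff_isUnit.2
      ((Matrix.isUnit_iff_isUnit_det _).2 (isUnit_iff_ne_zero.2 hdet))
  have := hinj h3
  rw [sub_eq_zero] at this
  exact this

lemma affHom_eq_one {xh : Fin n → K} {M : GL (Fin n) K} (h : affHom xh M = 1) : M = 1 := by
  have hmv : ∀ z : Fin n → K, (M : Matrix (Fin n) (Fin n) K).mulVec z = z := by
    intro z
    have := congrFun (congrArg (fun e : Equiv.Perm (Fin n → K) => (e : (Fin n → K) → (Fin n → K))) h) (z + xh)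
    simp only [affHom_apply, Equiv.Perm.coe_one, id_eq, add_sub_cancel_right] at this
    exact add_right_cancel this
  ext i j
  have h2 := congrFun (hmv (Pi.single j 1)) i
  rw [Matrix.mulVec_single] at h2
  simp only [Pi.smul_apply, op_smul_eq_mul, Matrix.col_apply, mul_one] at h2
  rw [h2]
  simp [Pi.single_apply, Matrix.one_apply]

end Aux

/-- Free groups of affine maps `T_i(x) = A_i x + (I - A_i) xh` obtained
from a free group of matrices all of whose nonidentity elements `M` satisfy
`det (M - I) ≠ 0`; they act freely off `xh`, and (in the valued case) on suitable balls
and spheres, while lying in `SA(n,D,ε)`. -/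
theorem free_affine_group_of_free_linear
    {K : Type*} [Field K] (n : ℕ) {S : Type*}
    (A : S → GL (Fin n) K)
    -- `{A_i}` is a basis of a free subgroup `F ≤ GL(n,K)`
    (hfree : Function.Injective (FreeGroup.lift A : FreeGroup S →* GL (Fin n) K))
    -- `det (M - I_n) ≠ 0` for every `M ∈ F \ {I_n}`
    (hdet : ∀ w : FreeGroup S, w ≠ 1 →
      (((FreeGroup.lift A w : GL (Fin n) K) : Matrix (Fin n) (Fin n) K) - 1).det ≠ 0)
    (xh : Fin n → K) :
    ∃ T : S → Equiv.Perm (Fin n → K),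
      -- `T_i (x) = A_i x + u_i` with `u_i = (I - A_i) xh`
      (∀ i (y : Fin n → K), T i y =
        ((A i : GL (Fin n) K) : Matrix (Fin n) (Fin n) K).mulVec y +
          ((1 : Matrix (Fin n) (Fin n) K) -
            ((A i : GL (Fin n) K) : Matrix (Fin n) (Fin n) K)).mulVec xh) ∧
      -- `{T_i}` is a basis of a free subgroup `F'` of the affine group
      Function.Injective (FreeGroup.lift T : FreeGroup S →* Equiv.Perm (Fin n → K)) ∧
      -- `F'` acts on `K^n \ {xh}` without nontrivial fixed points
      (∀ w : FreeGroup S, w ≠ 1 → ∀ y : Fin n → K, y ≠ xh → FreeGroup.lift T w y ≠ y) ∧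
      -- the additional valued-field part
      (∀ (v : K → ℝ), IsNAV v → ∀ (x : Fin n → K) (r ε : ℝ), x ≠ xh →
        0 < r → r < stdNorm v (x - xh) → 0 < ε →
        ε ≤ (if xh = 0 then r / stdNorm v x
             else min (r / stdNorm v (x - xh)) (1 / stdNorm v xh)) →
        -- `F ≤ SL(n,D,ε)`
        (∀ w : FreeGroup S,
          (∀ i j, v (((FreeGroup.lift A w : GL (Fin n) K) : Matrix (Fin n) (Fin n) K) i j) ≤ 1) ∧
          ((FreeGroup.lift A w : GL (Fin n) K) : Matrix (Fin n) (Fin n) K).det = 1 ∧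
          (∀ i, v ((((FreeGroup.lift A w : GL (Fin n) K) : Matrix (Fin n) (Fin n) K)) i i - 1) < ε) ∧
          (∀ i j, i ≠ j →
            v ((((FreeGroup.lift A w : GL (Fin n) K) : Matrix (Fin n) (Fin n) K)) i j) < ε)) →
        -- then `F' ≤ SA(n,D,ε)` …
        (∀ w : FreeGroup S, memSAeps v ε (FreeGroup.lift T w)) ∧
        -- … and `F'` acts without nontrivial fixed points on `B[x,r]`, `B(x,r)` and `S[x,r]`
        (∀ w : FreeGroup S, w ≠ 1 → ∀ y ∈ cBall v x r, FreeGroup.lift T w y ≠ y) ∧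
        (∀ w : FreeGroup S, w ≠ 1 → ∀ y ∈ oBall v x r, FreeGroup.lift T w y ≠ y) ∧
        (∀ w : FreeGroup S, w ≠ 1 → ∀ y ∈ sph v x r, FreeGroup.lift T w y ≠ y)) := by
  set T : S → Equiv.Perm (Fin n → K) := fun i => affHom xh (A i) with hT
  have hkey : FreeGroup.lift T = (affHom xh).comp (FreeGroup.lift A) := by
    apply FreeGroup.ext_hom
    intro a
    simp [hT]
  have hkey' : ∀ w : FreeGroup S, FreeGroup.lift T w = affHom xh (FreeGroup.lift A w) := by
    intro w; rw [hkey]; rfl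
  -- fixed point freeness off xh
  have hfp : ∀ w : FreeGroup S, w ≠ 1 → ∀ y : Fin n → K, y ≠ xh →
      FreeGroup.lift T w y ≠ y := by
    intro w hw y hy hc
    rw [hkey' w] at hc
    exact hy (affHom_fixed (hdet w hw) hc)
  refine ⟨T, ?_, ?_, hfp, ?_⟩
  · -- formula
    intro i y
    rw [show (T i) y = ((A i : GL (Fin n) K) : Matrix (Fin n) (Fin n) K).mulVec (y - xh) + xh
      from rfl]
    exact affine_rewrite _ _ _
  · -- injectivity
    refine (injective_iff_map_eq_one _).2 ?_
    intro w hw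
    rw [hkey' w] at hw
    have h1 : FreeGroup.lift A w = 1 := affHom_eq_one hw
    exact hfree (by rw [h1, map_one])
  · -- valued part
    intro v hv x r ε hx hrpos hrlt hεpos hεle hSL
    have hxh_ne : ∀ y : Fin n → K, stdNorm v (y - x) ≤ r → y ≠ xh := by
      intro y hy heq
      subst heq
      rw [stdNorm_sub_comm hv] at hy
      linarith
    refine ⟨?_, ?_, ?_, ?_⟩
    · -- F' ≤ SA(n,D,ε)
      intro w
      obtain ⟨hent, hdet1, hdiag, hoff⟩ := hSL w
      set M : Matrix (Fin n) (Fin n) K := ((FreeGroup.lift A w : GL (Fin n) K) : Matrix (Fin n) (Fin n) K) with hM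
      refine ⟨M, ((1 : Matrix (Fin n) (Fin n) K) - M).mulVec xh, hent, hdet1, hdiag, hoff,
        ?_, ?_⟩
      · -- |τ i| ≤ 1
        intro i
        by_cases hxh0 : xh = 0
        · subst hxh0
          simp [Matrix.mulVec_zero, hv.v_zero]
        · have hNpos : 0 < stdNorm v xh := stdNorm_pos hv hxh0
          have hε1 : ε ≤ 1 / stdNorm v xh := by
            rw [if_neg hxh0] at hεle
            exact le_trans hεle (min_le_right _ _)
          have hεN : ε * stdNorm v xh ≤ 1 := by
            rw [le_div_iff₀ hNpos] at hε1
            exact hε1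
          have hentry : ∀ j, v (((1 : Matrix (Fin n) (Fin n) K) - M) i j) ≤ ε := by
            intro j
            by_cases hij : i = j
            · subst hij
              rw [Matrix.sub_apply, Matrix.one_apply_eq,
                show (1 : K) - M i i = -(M i i - 1) by ring, hv.v_neg]
              exact le_of_lt (hdiag i)
            · rw [Matrix.sub_apply, Matrix.one_apply_ne hij, zero_sub, hv.v_neg]
              exact le_of_lt (hoff i j hij)
          rw [show (((1 : Matrix (Fin n) (Fin n) K) - M).mulVec xh) i =
              ∑ j, ((1 : Matrix (Fin n) (Fin n) K) - M) i j * xh j from rfl]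
          refine hv.v_sum_le Finset.univ _ zero_le_one ?_
          intro j _
          rw [hv.map_mul']
          calc v (((1 : Matrix (Fin n) (Fin n) K) - M) i j) * v (xh j)
              ≤ ε * stdNorm v xh :=
                mul_le_mul (hentry j) (le_stdNorm v xh j) (hv.nonneg _) (le_of_lt hεpos)
            _ ≤ 1 := hεN
      · -- affine formula
        intro y
        rw [hkey' w, affHom_apply]
        exact affine_rewrite _ _ _
    · intro w hw y hy
      exact hfp w hw y (hxh_ne y hy)
    · intro w hw y hy
      exact hfp w hw y (hxh_ne y (le_of_lt hy))
    · intro w hw y hy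
      exact hfp w hw y (hxh_ne y (le_of_eq hy))
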